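/- arXiv:1903.11424 — 2 statements merged into one kernel-verified Lean document; each statement's English description precedes it below -/
import Mathlib

section
/- Let A be a unital complex Banach algebra and δ : A → ℂ a map satisfying δ(x) - δ(y) ∈ 𝕋·σ(x - y) for all x, y ∈ A, where 𝕋 is the unit circle and σ denotes the spectrum. Then for every a ∈ A, the map λ ↦ δ(a + λ·1) - δ(a) is an isometry of ℂ fixing 0; in particular either δ(a + λ·1) - δ(a) = λ(δ(a+1) - δ(a)) for all λ ∈ ℂ, or δ(a + λ·1) - δ(a) = conj(λ)(δ(a+1) - δ(a)) for all λ ∈ ℂ. -/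
open Complex

lemma plane_isometry_classify (f : ℂ → ℂ) (hiso : Isometry f) (h0 : f 0 = 0) :
    (∀ z, f z = f 1 * z) ∨ (∀ z, f z = f 1 * (starRingEnd ℂ) z) := by
  let g : ℂ →ᵃⁱ[ℝ] ℂ := hiso.affineIsometryOfStrictConvexSpace
  have hg : ∀ z, g.linearIsometry z = f z := by
    intro z
    have := g.map_vsub z 0
    simpa [g, h0] using this
  have hsurj : Function.Surjective g.linearIsometry := by
    have hinj : Function.Injective g.linearIsometry.toLinearMap := g.linearIsometry.injective
    exact LinearMap.surjective_of_injective hinj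
  let e : ℂ ≃ₗᵢ[ℝ] ℂ := LinearIsometryEquiv.ofSurjective g.linearIsometry hsurj
  have he : ∀ z, e z = f z := fun z => hg z
  obtain ⟨a, ha | ha⟩ := linear_isometry_complex e
  · left
    intro z
    have h1 : f 1 = a := by rw [← he 1, ha]; simp [rotation_apply]
    rw [← he z, ha, h1]
    simp [rotation_apply]
  · right
    intro z
    have h1 : f 1 = a := by rw [← he 1, ha]; simp [rotation_apply]
    rw [← he z, ha, h1]
    simp [rotation_apply, mul_comm]

theorem translate_map_is_isometry
    {A : Type*} [NormedRing A] [NormedAlgebra ℂ A] [CompleteSpace A]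
    (δ : A → ℂ)
    (hsp : ∀ x y : A, ∃ μ s : ℂ, ‖μ‖ = 1 ∧ s ∈ spectrum ℂ (x - y) ∧
      δ x - δ y = μ * s) :
    ∀ a : A,
      ((∀ l₁ l₂ : ℂ,
          ‖(δ (a + l₁ • (1 : A)) - δ a) - (δ (a + l₂ • (1 : A)) - δ a)‖
            = ‖l₁ - l₂‖) ∧
        δ (a + (0 : ℂ) • (1 : A)) - δ a = 0) ∧
      ((∀ l : ℂ, δ (a + l • (1 : A)) - δ a = l * (δ (a + 1) - δ a)) ∨
        (∀ l : ℂ, δ (a + l • (1 : A)) - δ a = (starRingEnd ℂ) l * (δ (a + 1) - δ a))) := by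
  intro a
  rcases subsingleton_or_nontrivial A with hsub | hnt
  · obtain ⟨μ, s, _, hs, _⟩ := hsp a a
    rw [spectrum.of_subsingleton] at hs
    exact absurd hs (Set.notMem_empty s)
  -- nontrivial case
  set f : ℂ → ℂ := fun l => δ (a + l • (1 : A)) - δ a with hf
  have key : ∀ l₁ l₂ : ℂ, ‖f l₁ - f l₂‖ = ‖l₁ - l₂‖ := by
    intro l₁ l₂
    obtain ⟨μ, s, hμ, hs, heq⟩ := hsp (a + l₁ • (1 : A)) (a + l₂ • (1 : A))
    have hd : (a + l₁ • (1 : A)) - (a + l₂ • (1 : A)) = (l₁ - l₂) • (1 : A) := by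
      rw [sub_smul]; abel
    rw [hd, Algebra.smul_def, mul_one, spectrum.scalar_eq] at hs
    rw [Set.mem_singleton_iff] at hs
    have : f l₁ - f l₂ = μ * s := by
      simp only [hf]; rw [← heq]; ring
    rw [this, norm_mul, hμ, one_mul, hs]
  have h0 : f 0 = 0 := by
    simp [hf]
  have hiso : Isometry f := by
    intro l₁ l₂
    rw [edist_dist, edist_dist, Complex.dist_eq, Complex.dist_eq, key]
  have hclass := plane_isometry_classify f hiso h0
  have hf1 : f 1 = δ (a + 1) - δ a := by simp [hf]
  refine ⟨⟨key, h0⟩, ?_⟩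
  rcases hclass with h | h
  · left; intro l; rw [← hf1, mul_comm]; exact h l
  · right; intro l; rw [← hf1, mul_comm]; exact h l
end

section
/- Let A be a unital complex Banach algebra and δ : A → ℂ satisfy δ(x) - δ(y) ∈ 𝕋·σ(x - y) for all x, y ∈ A. Define A₁ = {a ∈ A : δ(a + λ·1) - δ(a) = λ(δ(a+1) - δ(a)) for all λ ∈ ℂ} and A₋₁ = {a ∈ A : δ(a + λ·1) - δ(a) = conj(λ)(δ(a+1) - δ(a)) for all λ ∈ ℂ}. Then A₁ and A₋₁ are closed, disjoint, and A = A₁ ∪ A₋₁; hence by connectedness of A, A = A₁ or A = A₋₁. -/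
open Complex

/-- Classification of isometries of `ℂ` fixing `0`: rotation or conjugate-rotation. -/
lemma isometry_complex_classify (f : ℂ → ℂ) (h0 : f 0 = 0)
    (hiso : ∀ l m : ℂ, ‖f l - f m‖ = ‖l - m‖) :
    (∀ l, f l = l * f 1) ∨ (∀ l, f l = (starRingEnd ℂ) l * f 1) := by
  have hre : ∀ l m : ℂ, (f l * (starRingEnd ℂ) (f m)).re = (l * (starRingEnd ℂ) m).re := by
    intro l m
    have habs : ∀ z : ℂ, normSq (f z) = normSq z := by
      intro z
      have := hiso z 0
      rw [h0, sub_zero, sub_zero] at this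
      rw [normSq_eq_norm_sq, normSq_eq_norm_sq, this]
    have h1 : normSq (f l - f m) = normSq (l - m) := by
      rw [normSq_eq_norm_sq, normSq_eq_norm_sq, hiso]
    rw [normSq_sub, normSq_sub, habs, habs] at h1
    linarith
  set c := f 1 with hc
  have hnc : normSq c = 1 := by
    have := hiso 1 0
    rw [h0, sub_zero, sub_zero] at this
    rw [hc, normSq_eq_norm_sq, this]; norm_num
  set u := f I * (starRingEnd ℂ) c with hu
  have hure : u.re = 0 := by
    have := hre I 1
    simpa [hu, Complex.ext_iff] using this
  have hunsq : normSq u = 1 := by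
    have habsI : normSq (f I) = 1 := by
      have := hiso I 0
      rw [h0, sub_zero, sub_zero] at this
      rw [normSq_eq_norm_sq, this]; simp
    rw [hu, normSq_mul, normSq_conj, habsI, hnc, one_mul]
  have huim : u.im = 1 ∨ u.im = -1 := by
    have : u.im ^ 2 = 1 := by
      have := hunsq
      rw [normSq_apply, hure] at this
      nlinarith
    have hfac : (u.im - 1) * (u.im + 1) = 0 := by nlinarith
    rcases mul_eq_zero.mp hfac with h | h
    · left; linarith
    · right; linarith
  have hfIc : f I = u * c := by
    rw [hu, mul_assoc, mul_comm ((starRingEnd ℂ) c) c, Complex.mul_conj, hnc]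
    simp
  have hmain : ∀ l : ℂ, (f l * (starRingEnd ℂ) c).re = l.re ∧
      (f l * (starRingEnd ℂ) c).im * u.im = l.im := by
    intro l
    constructor
    · have := hre l 1
      simpa [Complex.ext_iff] using this
    · have h2 := hre l I
      rw [hfIc] at h2
      have hlhs : (f l * (starRingEnd ℂ) (u * c)).re
          = (f l * (starRingEnd ℂ) c).re * u.re + (f l * (starRingEnd ℂ) c).im * u.im := by
        simp [map_mul, Complex.mul_re, Complex.mul_im, Complex.conj_re, Complex.conj_im]
        ring
      have hrhs : (l * (starRingEnd ℂ) I).re = l.im := by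
        simp [Complex.mul_re]
      rw [hlhs, hrhs, hure] at h2
      linarith
  rcases huim with he | he
  · left
    intro l
    obtain ⟨h1, h2⟩ := hmain l
    rw [he, mul_one] at h2
    have hv : f l * (starRingEnd ℂ) c = l := Complex.ext h1 h2
    calc f l = f l * ((starRingEnd ℂ) c * c) := by
            rw [mul_comm ((starRingEnd ℂ) c) c, Complex.mul_conj, hnc]; simp
      _ = (f l * (starRingEnd ℂ) c) * c := by ring
      _ = l * c := by rw [hv]
  · right
    intro l
    obtain ⟨h1, h2⟩ := hmain l
    rw [he] at h2
    have hv : f l * (starRingEnd ℂ) c = (starRingEnd ℂ) l := by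
      apply Complex.ext
      · simpa using h1
      · simp only [Complex.conj_im]; linarith
    calc f l = f l * ((starRingEnd ℂ) c * c) := by
            rw [mul_comm ((starRingEnd ℂ) c) c, Complex.mul_conj, hnc]; simp
      _ = (f l * (starRingEnd ℂ) c) * c := by ring
      _ = (starRingEnd ℂ) l * c := by rw [hv]

theorem A1_Aneg1_clopen_partition
    {A : Type*} [NormedRing A] [NormedAlgebra ℂ A] [CompleteSpace A]
    (δ : A → ℂ)
    (hsp : ∀ x y : A, ∃ μ s : ℂ, ‖μ‖ = 1 ∧ s ∈ spectrum ℂ (x - y) ∧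
      δ x - δ y = μ * s) :
    let A₁ : Set A := {a | ∀ l : ℂ, δ (a + l • (1 : A)) - δ a = l * (δ (a + 1) - δ a)}
    let Aneg : Set A := {a | ∀ l : ℂ,
      δ (a + l • (1 : A)) - δ a = (starRingEnd ℂ) l * (δ (a + 1) - δ a)}
    IsClosed A₁ ∧ IsClosed Aneg ∧ Disjoint A₁ Aneg ∧ A₁ ∪ Aneg = Set.univ ∧
      (A₁ = Set.univ ∨ Aneg = Set.univ) := by
  intro A₁ Aneg
  -- A is nontrivial
  have hnt : Nontrivial A := by
    by_contra h
    rw [not_nontrivial_iff_subsingleton] at h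
    obtain ⟨μ, s, _, hs, _⟩ := hsp 0 0
    exact (spectrum.mem_iff.mp hs) (isUnit_of_subsingleton _)
  -- key isometry property
  have hkey : ∀ (a : A) (l m : ℂ),
      ‖δ (a + l • (1 : A)) - δ (a + m • (1 : A))‖ = ‖l - m‖ := by
    intro a l m
    obtain ⟨μ, s, hμ, hs, heq⟩ := hsp (a + l • (1 : A)) (a + m • (1 : A))
    have hdiff : a + l • (1 : A) - (a + m • (1 : A)) = algebraMap ℂ A (l - m) := by
      rw [Algebra.algebraMap_eq_smul_one, sub_smul]
      abel
    rw [hdiff, spectrum.scalar_eq] at hs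
    rw [Set.mem_singleton_iff] at hs
    rw [heq, norm_mul, hμ, one_mul, hs]
  -- δ is Lipschitz, hence continuous
  have hlip : ∀ x y : A, ‖δ x - δ y‖ ≤ ‖x - y‖ * ‖(1 : A)‖ := by
    intro x y
    obtain ⟨μ, s, hμ, hs, heq⟩ := hsp x y
    rw [heq, norm_mul, hμ, one_mul]
    exact spectrum.norm_le_norm_mul_of_mem hs
  have hcont : Continuous δ := by
    rw [Metric.continuous_iff]
    intro x ε hε
    rcases le_or_gt ‖(1 : A)‖ 0 with h1 | h1
    · refine ⟨1, one_pos, fun y _ => ?_⟩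
      have := hlip y x
      have h2 : ‖y - x‖ * ‖(1 : A)‖ ≤ 0 := mul_nonpos_of_nonneg_of_nonpos (norm_nonneg _) h1
      have h3 : ‖δ y - δ x‖ ≤ 0 := le_trans this h2
      have h4 : ‖δ y - δ x‖ = 0 := le_antisymm h3 (norm_nonneg _)
      rw [Complex.dist_eq, h4]; exact hε
    · refine ⟨ε / ‖(1 : A)‖, div_pos hε h1, fun y hy => ?_⟩
      rw [Complex.dist_eq]
      calc ‖δ y - δ x‖ ≤ ‖y - x‖ * ‖(1 : A)‖ := hlip y x
        _ < (ε / ‖(1 : A)‖) * ‖(1 : A)‖ := by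
            apply mul_lt_mul_of_pos_right _ h1
            rwa [dist_eq_norm] at hy
        _ = ε := div_mul_cancel₀ ε (ne_of_gt h1)
  -- closedness
  have hclosed1 : IsClosed A₁ := by
    have : A₁ = ⋂ l : ℂ, {a : A | δ (a + l • (1 : A)) - δ a = l * (δ (a + 1) - δ a)} := by
      ext a; simp [A₁, Set.mem_iInter, Set.mem_setOf_eq]
    rw [this]
    refine isClosed_iInter fun l => isClosed_eq ?_ ?_
    · exact (hcont.comp (continuous_id.add continuous_const)).sub hcont
    · exact continuous_const.mul ((hcont.comp (continuous_id.add continuous_const)).sub hcont)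
  have hclosedn : IsClosed Aneg := by
    have : Aneg = ⋂ l : ℂ, {a : A | δ (a + l • (1 : A)) - δ a
        = (starRingEnd ℂ) l * (δ (a + 1) - δ a)} := by
      ext a; simp [Aneg, Set.mem_iInter, Set.mem_setOf_eq]
    rw [this]
    refine isClosed_iInter fun l => isClosed_eq ?_ ?_
    · exact (hcont.comp (continuous_id.add continuous_const)).sub hcont
    · exact continuous_const.mul ((hcont.comp (continuous_id.add continuous_const)).sub hcont)
  -- union is univ
  have hone : ∀ a : A, a + (1 : ℂ) • (1 : A) = a + 1 := by intro a; rw [one_smul]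
  have hunion : A₁ ∪ Aneg = Set.univ := by
    ext a
    simp only [Set.mem_union, Set.mem_univ, iff_true]
    set f : ℂ → ℂ := fun l => δ (a + l • (1 : A)) - δ a with hf
    have hf0 : f 0 = 0 := by simp [hf]
    have hfiso : ∀ l m : ℂ, ‖f l - f m‖ = ‖l - m‖ := by
      intro l m
      have : f l - f m = δ (a + l • (1 : A)) - δ (a + m • (1 : A)) := by simp only [hf]; ring
      rw [this, hkey]
    have hf1 : f 1 = δ (a + 1) - δ a := by simp only [hf, hone a]
    rcases isometry_complex_classify f hf0 hfiso with h | h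
    · left; intro l; have := h l; rw [hf1] at this; exact this
    · right; intro l; have := h l; rw [hf1] at this; exact this
  -- disjoint
  have hdisj : Disjoint A₁ Aneg := by
    rw [Set.disjoint_left]
    intro a ha1 han
    have hc1 : ‖δ (a + 1) - δ a‖ = 1 := by
      have := hkey a 1 0
      rw [zero_smul, add_zero, hone a] at this
      simpa using this
    have h1 := ha1 Complex.I
    have h2 := han Complex.I
    rw [h1] at h2
    have hIne : (Complex.I : ℂ) ≠ (starRingEnd ℂ) Complex.I := by
      simp [Complex.ext_iff]
      norm_num
    have hcne : δ (a + 1) - δ a ≠ 0 := by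
      intro h; rw [h] at hc1; simp at hc1
    exact hIne (mul_right_cancel₀ hcne h2)
  refine ⟨hclosed1, hclosedn, hdisj, hunion, ?_⟩
  -- connectedness
  have hcompl : A₁ᶜ = Aneg \ A₁ := by
    ext a
    simp only [Set.mem_compl_iff, Set.mem_diff]
    constructor
    · intro h
      have : a ∈ A₁ ∪ Aneg := hunion ▸ Set.mem_univ a
      rcases this with h' | h'
      · exact absurd h' h
      · exact ⟨h', h⟩
    · exact fun h => h.2
  have hopen1 : IsOpen A₁ := by
    rw [← isClosed_compl_iff, hcompl]
    have : Aneg \ A₁ = Aneg := by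
      ext a
      simp only [Set.mem_diff, and_iff_left_iff_imp]
      intro han ha1
      exact Set.disjoint_left.mp hdisj ha1 han
    rw [this]
    exact hclosedn
  haveI : PreconnectedSpace A := by infer_instance
  rcases isClopen_iff.mp ⟨hclosed1, hopen1⟩ with h | h
  · right
    rw [h, Set.empty_union] at hunion
    exact hunion
  · left; exact h
end
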